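/- For ψ ∈ ℂ², with ψ·ψ = 2·((ψψ†) - tr(ψψ†)·1), one has (ψ·ψ)ψ = 0 (the 3-ψ's rule for ℂ, dimension 4). -/
import Mathlib

open Matrix

/-- The outer product `ψφ†` of two complex 2-component spinors. -/
def couter (ψ φ : Fin 2 → ℂ) : Matrix (Fin 2) (Fin 2) ℂ :=
  Matrix.of fun i j => ψ i * star (φ j)

/-- Trace reversal `M̃ = M - (tr M)·1`. -/
noncomputable def ctilde (M : Matrix (Fin 2) (Fin 2) ℂ) : Matrix (Fin 2) (Fin 2) ℂ :=
  M - (Matrix.trace M) • (1 : Matrix (Fin 2) (Fin 2) ℂ)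

/-- The 3-ψ's rule over ℂ (dimension 4): with `ψ·ψ = 2((ψψ†) - tr(ψψ†)·1)`,
the matrix `ψ·ψ` annihilates `ψ`. -/
theorem three_psis_rule_complex (ψ : Fin 2 → ℂ) :
    ((2 : ℂ) • ctilde (couter ψ ψ)) *ᵥ ψ = 0 := by
  funext i
  simp [ctilde, couter, mulVec, dotProduct, Matrix.trace, Matrix.diag,
    Fin.sum_univ_two, Matrix.one_apply]
  fin_cases i <;> simp <;> ring
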